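/- Let M be a nonempty subset of ℝ^m with the property that for every b ∈ ℝ^m, every local maximum of the linear function c ↦ ⟨c, b⟩ on M is a global maximum on M. Let A = [a_{jk}] be a symmetric N×N matrix with nonnegative entries, and define P_L(y) = (1/(2N²)) Σ_{k=1}^N Σ_{j=1}^N a_{jk} ⟨y_j, y_k⟩ on M^N. If y* = (y_1*,…,y_N*) ∈ M^N is a local maximizer of P_L on M^N (with respect to the topology M^N inherits as a subset of (ℝ^m)^N), then y* is a consensus configuration: for every k, y_k* globally maximizes c ↦ ⟨c, Σ_j a_{jk} y_j*⟩ over c ∈ M. -/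

import Mathlib

open scoped RealInnerProductSpace

/-- Paper's Proposition 6 (maximum case): on a set `M ⊆ ℝ^m` satisfying
Assumption 2 (local maxima of linear functions on `M` are global), any local
maximizer of `P_L` on `M^N` (for a symmetric nonnegative weight matrix) is a
consensus configuration. -/
theorem stmt3 {m N : ℕ}
    (M : Set (EuclideanSpace ℝ (Fin m))) (hMne : M.Nonempty)
    (hass2 : ∀ b : EuclideanSpace ℝ (Fin m), ∀ c₀ ∈ M,
      IsLocalMaxOn (fun c => ⟪c, b⟫) M c₀ → ∀ c ∈ M, ⟪c, b⟫ ≤ ⟪c₀, b⟫)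
    (a : Fin N → Fin N → ℝ) (hsym : ∀ j k, a j k = a k j) (ha : ∀ j k, 0 ≤ a j k)
    (ystar : Fin N → EuclideanSpace ℝ (Fin m)) (hy : ∀ k, ystar k ∈ M)
    (hmax : IsLocalMaxOn
      (fun y : Fin N → EuclideanSpace ℝ (Fin m) =>
        (1 / (2 * (N : ℝ) ^ 2)) * ∑ k, ∑ j, a j k * ⟪y j, y k⟫)
      {y | ∀ k, y k ∈ M} ystar) :
    ∀ k, ∀ c ∈ M,
      ⟪c, ∑ j, a j k • ystar j⟫ ≤ ⟪ystar k, ∑ j, a j k • ystar j⟫ := by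
  intro k
  set B : EuclideanSpace ℝ (Fin m) := ∑ j, a j k • ystar j with hB
  -- the update map
  set φ : EuclideanSpace ℝ (Fin m) → (Fin N → EuclideanSpace ℝ (Fin m)) :=
    fun c => Function.update ystar k c with hφ
  have hφk : φ (ystar k) = ystar := Function.update_eq_self k ystar
  have hmaps : Set.MapsTo φ M {y | ∀ k, y k ∈ M} := by
    intro c hc i
    rcases eq_or_ne i k with rfl | h
    · simpa [hφ] using hc
    · simpa [hφ, Function.update_of_ne h] using hy i
  have hcont : Continuous φ := by
    refine continuous_pi fun i => ?_
    rcases eq_or_ne i k with rfl | h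
    · simpa [hφ] using continuous_id'
    · simpa [hφ, Function.update_of_ne h] using continuous_const
  have htend : Filter.Tendsto φ (nhdsWithin (ystar k) M)
      (nhdsWithin ystar {y | ∀ k, y k ∈ M}) := by
    have := hcont.continuousWithinAt (s := M) (x := ystar k)
    have h2 := this.tendsto_nhdsWithin hmaps
    rwa [hφk] at h2
  have hloc : ∀ᶠ c in nhdsWithin (ystar k) M,
      (1 / (2 * (N : ℝ) ^ 2)) * ∑ k', ∑ j, a j k' * ⟪φ c j, φ c k'⟫ ≤
      (1 / (2 * (N : ℝ) ^ 2)) * ∑ k', ∑ j, a j k' * ⟪ystar j, ystar k'⟫ :=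
    htend.eventually hmax
  -- key algebraic identity
  have key : ∀ c : EuclideanSpace ℝ (Fin m),
      (∑ k', ∑ j, a j k' * ⟪φ c j, φ c k'⟫)
        = (∑ k', ∑ j, a j k' * ⟪ystar j, ystar k'⟫)
          + 2 * ⟪c - ystar k, B⟫ + a k k * ⟪c - ystar k, c - ystar k⟫ := by
    intro c
    set d := c - ystar k with hd
    have hu : ∀ j, φ c j = ystar j + (if j = k then d else 0) := by
      intro j
      rcases eq_or_ne j k with rfl | h
      · simp [hφ, hd]
      · simp [hφ, Function.update_of_ne h, h]
    have hBd : ⟪d, B⟫ = ∑ j, a j k * ⟪ystar j, d⟫ := by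
      rw [hB, inner_sum]
      refine Finset.sum_congr rfl fun j _ => ?_
      rw [real_inner_smul_right, real_inner_comm]
    calc (∑ k', ∑ j, a j k' * ⟪φ c j, φ c k'⟫)
        = ∑ k', ∑ j, (a j k' * ⟪ystar j, ystar k'⟫
            + a j k' * ⟪ystar j, (if k' = k then d else 0)⟫
            + a j k' * ⟪(if j = k then d else 0), ystar k'⟫
            + a j k' * ⟪(if j = k then d else 0), (if k' = k then d else 0)⟫) := by
          refine Finset.sum_congr rfl fun k' _ => Finset.sum_congr rfl fun j _ => ?_
          rw [hu j, hu k', inner_add_left, inner_add_right, inner_add_right]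
          ring
      _ = (∑ k', ∑ j, a j k' * ⟪ystar j, ystar k'⟫)
          + (∑ k', ∑ j, a j k' * ⟪ystar j, (if k' = k then d else 0)⟫)
          + (∑ k', ∑ j, a j k' * ⟪(if j = k then d else 0), ystar k'⟫)
          + (∑ k', ∑ j, a j k' * ⟪(if j = k then d else 0), (if k' = k then d else 0)⟫) := by
          simp [Finset.sum_add_distrib]
      _ = (∑ k', ∑ j, a j k' * ⟪ystar j, ystar k'⟫)
          + 2 * ⟪d, B⟫ + a k k * ⟪d, d⟫ := by
          have h1 : (∑ k', ∑ j, a j k' * ⟪ystar j, (if k' = k then d else 0)⟫)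
              = ∑ j, a j k * ⟪ystar j, d⟫ := by
            rw [Finset.sum_comm]
            refine Finset.sum_congr rfl fun j _ => ?_
            simp [apply_ite (fun x => ⟪ystar j, x⟫ : EuclideanSpace ℝ (Fin m) → ℝ),
              mul_ite]
          have h2 : (∑ k', ∑ j, a j k' * ⟪(if j = k then d else 0), ystar k'⟫)
              = ∑ j, a j k * ⟪ystar j, d⟫ := by
            have : ∀ k', (∑ j, a j k' * ⟪(if j = k then d else 0), ystar k'⟫)
                = a k k' * ⟪d, ystar k'⟫ := by
              intro k'
              simp [apply_ite (fun x => (⟪x, ystar k'⟫ : ℝ)), mul_ite]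
            rw [Finset.sum_congr rfl fun k' _ => this k']
            refine Finset.sum_congr rfl fun j _ => ?_
            rw [hsym k j, real_inner_comm]
          have h3 : (∑ k', ∑ j, a j k' * ⟪(if j = k then d else 0), (if k' = k then d else 0)⟫)
              = a k k * ⟪d, d⟫ := by
            have : ∀ k', (∑ j, a j k' * ⟪(if j = k then d else 0), (if k' = k then d else 0)⟫)
                = a k k' * ⟪d, (if k' = k then d else 0)⟫ := by
              intro k'
              simp [apply_ite (fun x => (⟪x, (if k' = k then d else 0)⟫ : ℝ)), mul_ite]
            rw [Finset.sum_congr rfl fun k' _ => this k']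
            simp [apply_ite (fun x => (⟪d, x⟫ : ℝ)), mul_ite]
          rw [h1, h2, h3, hBd]
          ring
  have hN : (0:ℝ) < 1 / (2 * (N : ℝ) ^ 2) := by
    have : (0:ℝ) < (N:ℝ) := by exact_mod_cast k.pos
    positivity
  have ILM : IsLocalMaxOn (fun c : EuclideanSpace ℝ (Fin m) => ⟪c, B⟫) M (ystar k) := by
    refine hloc.mono fun c hc => ?_
    have hS : (∑ k', ∑ j, a j k' * ⟪φ c j, φ c k'⟫) ≤
        ∑ k', ∑ j, a j k' * ⟪ystar j, ystar k'⟫ := le_of_mul_le_mul_left (by linarith [hc]) hN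
    rw [key c] at hS
    have hdd : (0:ℝ) ≤ ⟪c - ystar k, c - ystar k⟫ := real_inner_self_nonneg
    have haa : (0:ℝ) ≤ a k k * ⟪c - ystar k, c - ystar k⟫ := mul_nonneg (ha k k) hdd
    have hsub : ⟪c - ystar k, B⟫ ≤ 0 := by linarith
    have := inner_sub_left (𝕜 := ℝ) c (ystar k) B
    simp only [this] at hsub
    linarith
  exact fun c hc => hass2 B (ystar k) (hy k) ILM c hc
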